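/- Let μ ≥ 1 be an integer, N = 2^μ, and work in ℂ^N with orthonormal basis { |z⟩ : z ∈ {-1,1}^μ }. Fix a ∈ {-1,1}^μ, let |ι⟩ = N^{−1/2} Σ_z |z⟩ be the flat superposition, and define the oracle A = I − 2|a⟩⟨a| and the estimator B = I − 2|ι⟩⟨ι|. Set χ(μ) = arcsin( 2^{−μ/2} ). Then for every nonnegative integer n: (B·A)^n |ι⟩ = α_n(μ) |a⟩ + β_n(μ) Σ_{z ≠ a} |z⟩, where α_n(μ) = (−1)^n sin( (2n+1) χ(μ) ) and β_n(μ) = (−1)^n cos( (2n+1) χ(μ) ) / sqrt( 2^μ − 1 ). -/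

import Mathlib

open Matrix Real

namespace GroverAux

variable {μ : ℕ} (a : Fin μ → ({-1, 1} : Finset ℤ))

def g (x y : ℂ) : (Fin μ → ({-1, 1} : Finset ℤ)) → ℂ := fun z => if z = a then x else y

lemma card_basis : Fintype.card (Fin μ → ({-1, 1} : Finset ℤ)) = 2 ^ μ := by
  simp [Fintype.card_fun]

lemma vecMulVec_mulVec {n : Type*} [Fintype n] (u w v : n → ℂ) :
    (Matrix.vecMulVec u w).mulVec v = (w ⬝ᵥ v) • u := by
  funext i
  simp [Matrix.vecMulVec, Matrix.mulVec, dotProduct, Finset.mul_sum, mul_comm, mul_assoc,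
    mul_left_comm]

lemma sum_if (x y : ℂ) : ∑ z : (Fin μ → ({-1, 1} : Finset ℤ)), (if z = a then x else y)
    = x + ((2 ^ μ : ℂ) - 1) * y := by
  classical
  have h : ∀ z, (if z = a then x else y) = y + (if z = a then x - y else 0) := by
    intro z; split <;> ring
  rw [Finset.sum_congr rfl fun z _ => h z, Finset.sum_add_distrib,
    Finset.sum_ite_eq' Finset.univ a fun _ => x - y]
  simp [Finset.card_univ, card_basis]
  ring

lemma single_dot (v : (Fin μ → ({-1, 1} : Finset ℤ)) → ℂ) :
    (Pi.single a 1 : (Fin μ → ({-1, 1} : Finset ℤ)) → ℂ) ⬝ᵥ v = v a := by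
  classical
  simp [dotProduct, Pi.single_apply, Finset.sum_ite_eq]

lemma star_single : star (Pi.single a 1 : (Fin μ → ({-1, 1} : Finset ℤ)) → ℂ) = Pi.single a 1 := by
  classical
  funext z
  simp [Pi.single_apply, apply_ite]

end GroverAux
namespace GroverAux
noncomputable def ik (μ : ℕ) : (Fin μ → ({-1, 1} : Finset ℤ)) → ℂ :=
  fun _ => ((Real.sqrt (2 ^ μ) : ℝ) : ℂ)⁻¹

lemma star_ik (μ : ℕ) : star (ik μ) = ik μ := by
  funext z
  simp [ik, Pi.star_apply, Complex.star_def, ← Complex.ofReal_inv, Complex.conj_ofReal]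

lemma cc (μ : ℕ) : ((Real.sqrt (2 ^ μ) : ℝ) : ℂ)⁻¹ * ((Real.sqrt (2 ^ μ) : ℝ) : ℂ)⁻¹
    = ((2 : ℂ) ^ μ)⁻¹ := by
  rw [← mul_inv, ← Complex.ofReal_mul, Real.mul_self_sqrt (by positivity)]
  push_cast
  ring

lemma stepA (x y : ℂ) :
    (1 - (2 : ℂ) • Matrix.vecMulVec (Pi.single a 1 : (Fin μ → ({-1, 1} : Finset ℤ)) → ℂ)
        (star (Pi.single a 1 : (Fin μ → ({-1, 1} : Finset ℤ)) → ℂ))).mulVec (g a x y)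
      = g a (-x) y := by
  rw [Matrix.sub_mulVec, Matrix.one_mulVec, Matrix.smul_mulVec, vecMulVec_mulVec,
    star_single, single_dot]
  funext z
  by_cases hz : z = a <;> simp [g, hz, Pi.single_apply] <;> ring

lemma stepB (x y : ℂ) :
    (1 - (2 : ℂ) • Matrix.vecMulVec (ik μ) (star (ik μ))).mulVec (g a x y)
      = g a (x - 2 * (x + ((2:ℂ)^μ - 1) * y) / (2:ℂ)^μ)
          (y - 2 * (x + ((2:ℂ)^μ - 1) * y) / (2:ℂ)^μ) := by
  rw [Matrix.sub_mulVec, Matrix.one_mulVec, Matrix.smul_mulVec, vecMulVec_mulVec, star_ik]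
  have hdot : (ik μ) ⬝ᵥ (g a x y)
      = ((Real.sqrt (2 ^ μ) : ℝ) : ℂ)⁻¹ * (x + ((2:ℂ)^μ - 1) * y) := by
    simp [ik, dotProduct, g, ← Finset.mul_sum, sum_if, mul_add, mul_left_comm]
  rw [hdot]
  funext z
  simp only [Pi.sub_apply, Pi.smul_apply, smul_eq_mul, ik]
  have h2 : (2:ℂ) * ((((Real.sqrt (2 ^ μ) : ℝ) : ℂ)⁻¹ * (x + ((2:ℂ)^μ - 1) * y))
      * ((Real.sqrt (2 ^ μ) : ℝ) : ℂ)⁻¹) = 2 * (x + ((2:ℂ)^μ - 1) * y) / (2:ℂ)^μ := by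
    rw [div_eq_mul_inv, ← cc μ]; ring
  rw [h2]
  by_cases hz : z = a <;> simp [g, hz]

noncomputable def χr (μ : ℕ) : ℝ := Real.arcsin ((2:ℝ) ^ (-(μ:ℝ)/2))
noncomputable def αr (μ n : ℕ) : ℝ := (-1)^n * Real.sin ((2*n+1) * χr μ)
noncomputable def βr (μ n : ℕ) : ℝ :=
  (-1)^n * Real.cos ((2*n+1) * χr μ) / Real.sqrt (2^μ - 1)

lemma sqrt_pow (μ : ℕ) : Real.sqrt ((2:ℝ)^μ) = (2:ℝ) ^ ((μ:ℝ)/2) := by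
  rw [Real.sqrt_eq_rpow, ← Real.rpow_natCast 2 μ, ← Real.rpow_mul (by norm_num)]
  ring_nf

lemma hsin (μ : ℕ) : Real.sin (χr μ) = (Real.sqrt ((2:ℝ)^μ))⁻¹ := by
  rw [χr, Real.sin_arcsin, sqrt_pow, ← Real.rpow_neg (by norm_num), neg_div]
  · exact le_trans (by norm_num) (Real.rpow_nonneg (by norm_num) _)
  · exact Real.rpow_le_one_of_one_le_of_nonpos (by norm_num)
      (by rw [neg_div]; exact neg_nonpos.mpr (by positivity))

lemma sq_s (μ : ℕ) : ((2:ℝ) ^ (-(μ:ℝ)/2)) ^ 2 = ((2:ℝ)^μ)⁻¹ := by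
  rw [← Real.rpow_natCast ((2:ℝ) ^ (-(μ:ℝ)/2)) 2, ← Real.rpow_mul (by norm_num),
    ← Real.rpow_natCast 2 μ, ← Real.rpow_neg (by norm_num)]
  norm_num

lemma hcos (μ : ℕ) : Real.cos (χr μ) = Real.sqrt ((2:ℝ)^μ - 1) / Real.sqrt ((2:ℝ)^μ) := by
  have h1 : (1:ℝ) ≤ 2^μ := one_le_pow₀ (by norm_num)
  rw [χr, Real.cos_arcsin, sq_s, ← Real.sqrt_div (by linarith)]
  congr 1
  have : ((2:ℝ)^μ) ≠ 0 := by positivity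
  field_simp

lemma recα (μ n : ℕ) (hμ : 1 ≤ μ) :
    αr μ (n+1) = ((2 - (2:ℝ)^μ)/(2:ℝ)^μ) * αr μ n
      - (2*((2:ℝ)^μ-1)/(2:ℝ)^μ) * βr μ n := by
  have h2 : (2:ℝ) ≤ 2^μ := by
    calc (2:ℝ) = 2^1 := by norm_num
    _ ≤ 2^μ := pow_le_pow_right₀ (by norm_num) hμ
  unfold αr βr
  have hstep : (2*((n+1:ℕ):ℝ)+1) * χr μ = (2*(n:ℝ)+1)*χr μ + (χr μ + χr μ) := by
    push_cast; ring
  rw [hstep, Real.sin_add, Real.sin_add, Real.cos_add, hsin, hcos]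
  have hP : (0:ℝ) < Real.sqrt ((2:ℝ)^μ - 1) := Real.sqrt_pos.mpr (by linarith)
  have hQ : (0:ℝ) < Real.sqrt ((2:ℝ)^μ) := Real.sqrt_pos.mpr (by positivity)
  have hP2 : Real.sqrt ((2:ℝ)^μ - 1)^2 = 2^μ - 1 := Real.sq_sqrt (by linarith)
  have hQ2 : Real.sqrt ((2:ℝ)^μ)^2 = 2^μ := Real.sq_sqrt (by positivity)
  have hrel : Real.sqrt ((2:ℝ)^μ - 1)^2 = Real.sqrt ((2:ℝ)^μ)^2 - 1 := by
    rw [hP2, hQ2]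
  field_simp
  linear_combination (Real.cos ((2*(n:ℝ)+1)*χr μ) * (-1)^n * (-2*(2:ℝ)^μ)
    + Real.sqrt ((2:ℝ)^μ-1) * Real.sin ((2*(n:ℝ)+1)*χr μ) * (-1)^n * (-(2:ℝ)^μ)) * hP2
    + (Real.sqrt ((2:ℝ)^μ-1) * Real.sin ((2*(n:ℝ)+1)*χr μ) * (-1)^n * ((2:ℝ)^μ - 2)
    + Real.cos ((2*(n:ℝ)+1)*χr μ) * (-1)^n * (2*(2:ℝ)^μ - 2)) * hQ2

lemma recβ (μ n : ℕ) (hμ : 1 ≤ μ) :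
    βr μ (n+1) = (2/(2:ℝ)^μ) * αr μ n + ((2 - (2:ℝ)^μ)/(2:ℝ)^μ) * βr μ n := by
  have h2 : (2:ℝ) ≤ 2^μ := by
    calc (2:ℝ) = 2^1 := by norm_num
    _ ≤ 2^μ := pow_le_pow_right₀ (by norm_num) hμ
  unfold αr βr
  have hstep : (2*((n+1:ℕ):ℝ)+1) * χr μ = (2*(n:ℝ)+1)*χr μ + (χr μ + χr μ) := by
    push_cast; ring
  rw [hstep, Real.cos_add, Real.sin_add, Real.cos_add, hsin, hcos]
  have hP : (0:ℝ) < Real.sqrt ((2:ℝ)^μ - 1) := Real.sqrt_pos.mpr (by linarith)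
  have hQ : (0:ℝ) < Real.sqrt ((2:ℝ)^μ) := Real.sqrt_pos.mpr (by positivity)
  have hP2 : Real.sqrt ((2:ℝ)^μ - 1)^2 = 2^μ - 1 := Real.sq_sqrt (by linarith)
  have hQ2 : Real.sqrt ((2:ℝ)^μ)^2 = 2^μ := Real.sq_sqrt (by positivity)
  field_simp
  linear_combination (-(Real.cos ((2*(n:ℝ)+1)*χr μ) * (-1)^n * (2:ℝ)^μ)) * hP2
    + (Real.cos ((2*(n:ℝ)+1)*χr μ) * (-1)^n * ((2:ℝ)^μ - 2)
    - 2 * Real.sqrt ((2:ℝ)^μ-1) * Real.sin ((2*(n:ℝ)+1)*χr μ) * (-1)^n) * hQ2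

lemma α0 (μ : ℕ) : αr μ 0 = (Real.sqrt ((2:ℝ)^μ))⁻¹ := by
  unfold αr
  norm_num [hsin]

lemma β0 (μ : ℕ) (hμ : 1 ≤ μ) : βr μ 0 = (Real.sqrt ((2:ℝ)^μ))⁻¹ := by
  have h2 : (2:ℝ) ≤ 2^μ := by
    calc (2:ℝ) = 2^1 := by norm_num
    _ ≤ 2^μ := pow_le_pow_right₀ (by norm_num) hμ
  have hP : Real.sqrt ((2:ℝ)^μ - 1) ≠ 0 := ne_of_gt (Real.sqrt_pos.mpr (by linarith))
  have hQ : Real.sqrt ((2:ℝ)^μ) ≠ 0 := ne_of_gt (Real.sqrt_pos.mpr (by positivity))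
  unfold βr
  norm_num
  rw [hcos]
  field_simp

end GroverAux

theorem grover_iterate' (μ : ℕ) (hμ : 1 ≤ μ)
    (a : Fin μ → ({-1, 1} : Finset ℤ)) (n : ℕ) :
    (((1 - (2 : ℂ) • Matrix.vecMulVec (GroverAux.ik μ) (star (GroverAux.ik μ))) *
        (1 - (2 : ℂ) • Matrix.vecMulVec (Pi.single a 1 : (Fin μ → ({-1, 1} : Finset ℤ)) → ℂ)
          (star (Pi.single a 1 : (Fin μ → ({-1, 1} : Finset ℤ)) → ℂ)))) ^ n).mulVec
        (GroverAux.ik μ) =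
      ((GroverAux.αr μ n : ℝ) : ℂ) • (Pi.single a 1 : (Fin μ → ({-1, 1} : Finset ℤ)) → ℂ) +
        ((GroverAux.βr μ n : ℝ) : ℂ) •
          ∑ z ∈ Finset.univ.filter (· ≠ a), Pi.single z (1 : ℂ) := by
  classical
  have hN : ((2:ℂ)^μ) ≠ 0 := pow_ne_zero _ two_ne_zero
  have key : ∀ m : ℕ,
      (((1 - (2 : ℂ) • Matrix.vecMulVec (GroverAux.ik μ) (star (GroverAux.ik μ))) *
        (1 - (2 : ℂ) • Matrix.vecMulVec (Pi.single a 1 : (Fin μ → ({-1, 1} : Finset ℤ)) → ℂ)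
          (star (Pi.single a 1 : (Fin μ → ({-1, 1} : Finset ℤ)) → ℂ)))) ^ m).mulVec
        (GroverAux.ik μ)
      = GroverAux.g a ((GroverAux.αr μ m : ℝ) : ℂ) ((GroverAux.βr μ m : ℝ) : ℂ) := by
    intro m
    induction m with
    | zero =>
      rw [pow_zero, Matrix.one_mulVec]
      funext z
      rw [GroverAux.α0, GroverAux.β0 μ hμ]
      unfold GroverAux.g GroverAux.ik
      split <;> simp
    | succ m ih =>
      rw [pow_succ', ← Matrix.mulVec_mulVec, ih, ← Matrix.mulVec_mulVec,
        GroverAux.stepA, GroverAux.stepB]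
      have e1 : -((GroverAux.αr μ m : ℝ) : ℂ) -
          2 * (-((GroverAux.αr μ m : ℝ) : ℂ) + ((2:ℂ)^μ - 1) * ((GroverAux.βr μ m : ℝ) : ℂ))
            / (2:ℂ)^μ
          = ((GroverAux.αr μ (m+1) : ℝ) : ℂ) := by
        rw [GroverAux.recα μ m hμ]
        push_cast
        field_simp
        ring
      have e2 : ((GroverAux.βr μ m : ℝ) : ℂ) -
          2 * (-((GroverAux.αr μ m : ℝ) : ℂ) + ((2:ℂ)^μ - 1) * ((GroverAux.βr μ m : ℝ) : ℂ))
            / (2:ℂ)^μ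
          = ((GroverAux.βr μ (m+1) : ℝ) : ℂ) := by
        rw [GroverAux.recβ μ m hμ]
        push_cast
        field_simp
        ring
      rw [e1, e2]
  rw [key n]
  funext z
  simp only [Pi.add_apply, Pi.smul_apply, smul_eq_mul, Finset.sum_apply, Pi.single_apply,
    Finset.sum_ite_eq, Finset.mem_filter, Finset.mem_univ, true_and]
  by_cases hz : z = a <;> simp [GroverAux.g, hz]


/-- Grover iteration formula.  Work in `ℂ^N`, `N = 2^μ`, with orthonormal basis
`{|z⟩ : z ∈ {-1,1}^μ}` (vectors are functions `({-1,1}^μ) → ℂ`, `|z⟩ = Pi.single z 1`).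
With `|ι⟩` the flat superposition, `A = I − 2|a⟩⟨a|` the oracle for the marked word `a`,
`B = I − 2|ι⟩⟨ι|` the estimator and `χ(μ) = arcsin(2^{−μ/2})`, the state after `n` Grover
iterations applied to `|ι⟩` is
`(B·A)^n |ι⟩ = α_n(μ) |a⟩ + β_n(μ) Σ_{z ≠ a} |z⟩`, with
`α_n(μ) = (−1)^n sin((2n+1)χ(μ))` and `β_n(μ) = (−1)^n cos((2n+1)χ(μ))/√(2^μ−1)`. -/
theorem grover_iterate (μ : ℕ) (hμ : 1 ≤ μ)
    (a : Fin μ → ({-1, 1} : Finset ℤ)) (n : ℕ) :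
    letI aKet : (Fin μ → ({-1, 1} : Finset ℤ)) → ℂ := Pi.single a 1
    letI iotaKet : (Fin μ → ({-1, 1} : Finset ℤ)) → ℂ :=
      fun _ => ((Real.sqrt (2 ^ μ) : ℝ) : ℂ)⁻¹
    letI A : Matrix (Fin μ → ({-1, 1} : Finset ℤ)) (Fin μ → ({-1, 1} : Finset ℤ)) ℂ :=
      1 - (2 : ℂ) • Matrix.vecMulVec aKet (star aKet)
    letI B : Matrix (Fin μ → ({-1, 1} : Finset ℤ)) (Fin μ → ({-1, 1} : Finset ℤ)) ℂ :=
      1 - (2 : ℂ) • Matrix.vecMulVec iotaKet (star iotaKet)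
    letI χ : ℝ := Real.arcsin ((2 : ℝ) ^ (-(μ : ℝ) / 2))
    letI α : ℝ := (-1) ^ n * Real.sin ((2 * n + 1) * χ)
    letI β : ℝ := (-1) ^ n * Real.cos ((2 * n + 1) * χ) / Real.sqrt (2 ^ μ - 1)
    ((B * A) ^ n).mulVec iotaKet =
      (α : ℂ) • aKet +
        (β : ℂ) • ∑ z ∈ Finset.univ.filter (· ≠ a), Pi.single z (1 : ℂ) := by
  exact grover_iterate' μ hμ a n
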